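/- For any vectors x, y ∈ ℝⁿ and λ > 0, ‖H_λ(x) − H_λ(y)‖₂ ≤ ‖x − y‖₂ + λ·√|S_x △ S_y|, where S_x = supp(H_λ(x)), S_y = supp(H_λ(y)), and S_x △ S_y denotes the symmetric difference of these index sets. -/

import Mathlib

open Finset
open scoped Classical BigOperators symmDiff

/-- Euclidean (ℓ²) norm of a vector in `ℝⁿ`. -/
noncomputable def norm2 {n : ℕ} (x : Fin n → ℝ) : ℝ := Real.sqrt (∑ i, (x i)^2)

/-- Support of a vector: the set of indices with nonzero entries. -/
noncomputable def supp {n : ℕ} (x : Fin n → ℝ) : Finset (Fin n) :=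
  Finset.univ.filter (fun i => x i ≠ 0)

/-- Hard thresholding operator with threshold `lam`. -/
noncomputable def Hthr {n : ℕ} (lam : ℝ) (x : Fin n → ℝ) : Fin n → ℝ :=
  fun i => if lam ≤ |x i| then x i else 0

lemma norm2_eq {n : ℕ} (x : Fin n → ℝ) :
    norm2 x = ‖(WithLp.equiv 2 (Fin n → ℝ)).symm x‖ := by
  simp [norm2, EuclideanSpace.norm_eq, Real.norm_eq_abs, sq_abs]

lemma norm2_add_le {n : ℕ} (a b : Fin n → ℝ) : norm2 (a + b) ≤ norm2 a + norm2 b := by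
  simp only [norm2_eq]
  exact norm_add_le ((WithLp.equiv 2 (Fin n → ℝ)).symm a) ((WithLp.equiv 2 (Fin n → ℝ)).symm b)

lemma norm2_mono {n : ℕ} (a b : Fin n → ℝ) (h : ∀ i, |a i| ≤ |b i|) :
    norm2 a ≤ norm2 b := by
  apply Real.sqrt_le_sqrt
  apply Finset.sum_le_sum
  intro i _
  rw [← sq_abs (a i), ← sq_abs (b i)]
  exact pow_le_pow_left₀ (abs_nonneg _) (h i) 2

lemma mem_supp_Hthr {n : ℕ} {lam : ℝ} (hlam : 0 < lam) (x : Fin n → ℝ) (i : Fin n) :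
    i ∈ supp (Hthr lam x) ↔ lam ≤ |x i| := by
  rw [supp, Finset.mem_filter]
  simp only [supp, Hthr, Finset.mem_filter, Finset.mem_univ, true_and]
  split_ifs with h
  · simp only [h, iff_true]
    intro hx
    rw [hx] at h; simp at h; linarith
  · simp [h]

theorem stmt_1 {n : ℕ} (lam : ℝ) (hlam : 0 < lam) (x y : Fin n → ℝ) :
    norm2 (Hthr lam x - Hthr lam y) ≤
      norm2 (x - y) + lam * Real.sqrt (((supp (Hthr lam x)) ∆ (supp (Hthr lam y))).card : ℝ) := by
  set T := (supp (Hthr lam x)) ∆ (supp (Hthr lam y)) with hT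
  set w : Fin n → ℝ := fun i => if lam ≤ |x i| ∨ lam ≤ |y i| then x i - y i else 0 with hw
  set r : Fin n → ℝ := Hthr lam x - Hthr lam y - w with hr
  have hsplit : Hthr lam x - Hthr lam y = w + r := by ring
  have hrT : ∀ i, (i ∈ T → |r i| ≤ lam) ∧ (i ∉ T → r i = 0) := by
    intro i
    have hTi : i ∈ T ↔ ¬ (lam ≤ |x i| ↔ lam ≤ |y i|) := by
      rw [hT, Finset.mem_symmDiff]
      rw [mem_supp_Hthr hlam, mem_supp_Hthr hlam]
      tauto
    have hri : ∀ v : ℝ, r i = v → ((i ∈ T → |r i| ≤ lam) ∧ (i ∉ T → r i = 0)) → True := fun _ _ _ => trivial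
    have hrdef : r i = Hthr lam x i - Hthr lam y i - w i := rfl
    by_cases h1 : lam ≤ |x i| <;> by_cases h2 : lam ≤ |y i|
    · have h0 : r i = 0 := by
        rw [hrdef]; simp only [Hthr, hw, if_pos h1, if_pos h2, if_pos (Or.inl h1)]; ring
      exact ⟨fun _ => by rw [h0, abs_zero]; exact hlam.le, fun _ => h0⟩
    · have h0 : r i = y i := by
        rw [hrdef]; simp only [Hthr, hw, if_pos h1, if_neg h2, if_pos (Or.inl h1)]; ring
      refine ⟨fun _ => by rw [h0]; exact (not_le.mp h2).le, fun hi => absurd (hTi.mpr ?_) hi⟩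
      tauto
    · have h0 : r i = -(x i) := by
        rw [hrdef]; simp only [Hthr, hw, if_neg h1, if_pos h2, if_pos (Or.inr h2)]; ring
      refine ⟨fun _ => by rw [h0, abs_neg]; exact (not_le.mp h1).le, fun hi => absurd (hTi.mpr ?_) hi⟩
      tauto
    · have h0 : r i = 0 := by
        rw [hrdef]
        simp only [Hthr, hw, if_neg h1, if_neg h2, if_neg (by tauto : ¬(lam ≤ |x i| ∨ lam ≤ |y i|))]
        ring
      exact ⟨fun _ => by rw [h0, abs_zero]; exact hlam.le, fun _ => h0⟩
  calc norm2 (Hthr lam x - Hthr lam y) = norm2 (w + r) := by rw [hsplit]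
    _ ≤ norm2 w + norm2 r := norm2_add_le w r
    _ ≤ norm2 (x - y) + lam * Real.sqrt (T.card : ℝ) := by
        gcongr ?_ + ?_
        · apply norm2_mono
          intro i
          simp only [hw, Pi.sub_apply]
          split_ifs
          · exact le_rfl
          · simp [abs_nonneg]
        · have hsum : ∑ i, (r i)^2 ≤ (T.card : ℝ) * lam^2 := by
            calc ∑ i, (r i)^2 = ∑ i ∈ T, (r i)^2 := by
                  refine (Finset.sum_subset (Finset.subset_univ T) ?_).symm
                  intro i _ hi
                  rw [(hrT i).2 hi]; ring
              _ ≤ ∑ i ∈ T, lam^2 := by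
                  apply Finset.sum_le_sum
                  intro i hi
                  rw [← sq_abs (r i)]
                  exact pow_le_pow_left₀ (abs_nonneg _) ((hrT i).1 hi) 2
              _ = (T.card : ℝ) * lam^2 := by rw [Finset.sum_const, nsmul_eq_mul]
          calc norm2 r ≤ Real.sqrt ((T.card : ℝ) * lam^2) := Real.sqrt_le_sqrt hsum
            _ = lam * Real.sqrt (T.card : ℝ) := by
                rw [Real.sqrt_mul (Nat.cast_nonneg _), Real.sqrt_sq hlam.le, mul_comm]
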